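/- The Dyson series D_{n,l}(t) for the interaction picture evolution of a*(f), defined recursively by D_{n,0}(t) = a*(f)|_{ℱₙ} and D_{n,l+1}(t) = i∫₀ᵗ [D_{n,l}(s), 𝐕(s)]|_{ℱₙ} ds, satisfies the norm bound ‖D_{n,l}(t)‖ ≤ (|t|^l / l!) (‖Vₙ‖ + ‖V_{n+1}‖)^l ‖f‖; consequently the series Σ_l D_{n,l}(t) converges absolutely in operator norm and each t ↦ D_{n,l}(t) is norm-continuous. -/

import Mathlib

noncomputable section

open scoped Nat

open MeasureTheory Filter Topology

set_option maxHeartbeats 1000000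

/-- uniformly bounded, strongly continuous family applied to a continuous path. -/
lemma strongCont_comp {F G : Type*} [NormedAddCommGroup F] [NormedSpace ℂ F]
    [NormedAddCommGroup G] [NormedSpace ℂ G]
    (T : ℝ → F →L[ℂ] G) (C : ℝ) (hT : ∀ s, ‖T s‖ ≤ C)
    (hTc : ∀ y, Continuous fun s => T s y) (y : ℝ → F) (hy : Continuous y) :
    Continuous fun s => T s (y s) := by
  rw [continuous_iff_continuousAt]
  intro s₀
  have h1 : Tendsto (fun s => T s (y s) - T s (y s₀)) (𝓝 s₀) (𝓝 0) := by
    have hb : ∀ s, ‖T s (y s) - T s (y s₀)‖ ≤ C * ‖y s - y s₀‖ := by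
      intro s
      rw [← map_sub]
      exact ((T s).le_opNorm _).trans
        (mul_le_mul_of_nonneg_right (hT s) (norm_nonneg _))
    have hg : Tendsto (fun s => C * ‖y s - y s₀‖) (𝓝 s₀) (𝓝 0) := by
      have : Tendsto (fun s => C * ‖y s - y s₀‖) (𝓝 s₀) (𝓝 (C * ‖y s₀ - y s₀‖)) :=
        tendsto_const_nhds.mul ((hy.sub continuous_const).norm.tendsto s₀)
      simpa using this
    exact squeeze_zero_norm hb hg
  have h2 := (hTc (y s₀)).tendsto s₀
  have h3 := h1.add h2
  simpa [ContinuousAt] using h3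

lemma abs_integral_abs_pow (l : ℕ) (t : ℝ) :
    |∫ s in (0:ℝ)..t, |s| ^ l| = |t| ^ (l + 1) / (l + 1) := by
  have key : ∀ u : ℝ, 0 ≤ u → (∫ s in (0:ℝ)..u, |s| ^ l) = u ^ (l + 1) / (l + 1) := by
    intro u hu
    have hcongr : Set.EqOn (fun s : ℝ => |s| ^ l) (fun s : ℝ => s ^ l) (Set.uIcc 0 u) := by
      intro s hs
      rw [Set.uIcc_of_le hu] at hs
      simp [abs_of_nonneg hs.1]
    rw [intervalIntegral.integral_congr hcongr, integral_pow]
    simp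
  rcases le_or_gt 0 t with ht | ht
  · rw [key t ht, abs_of_nonneg ht, abs_of_nonneg (by positivity)]
  · have h1 : (∫ s in (0:ℝ)..t, |s| ^ l) = ∫ s in (-t:ℝ)..0, |s| ^ l := by
      have h := intervalIntegral.integral_comp_neg (a := (0:ℝ)) (b := t)
        (fun s : ℝ => |s| ^ l)
      simpa using h
    rw [h1, intervalIntegral.integral_symm, key (-t) (by linarith), abs_neg,
      abs_of_nonneg (div_nonneg (pow_nonneg (by linarith) _) (by positivity)),
      abs_of_neg ht]

/- STATEMENT 15: the Dyson series terms D_{n,l}(t) for the interaction picture evolution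
of a*(f), defined by D_{n,0}(t) = a*(f)|_{ℱₙ} and
D_{n,l+1}(t) = i ∫₀ᵗ [D_{n,l}(s), 𝐕(s)]|_{ℱₙ} ds (integral in the strong operator topology,
[A, 𝐕(s)]|_{ℱₙ} = A Vₙ(s) − V_{n+1}(s) A for A : ℱₙ → ℱ_{n+1}), satisfy
‖D_{n,l}(t)‖ ≤ (|t|^l / l!)(‖Vₙ‖+‖V_{n+1}‖)^l ‖f‖; hence Σ_l ‖D_{n,l}(t)‖ converges and
each t ↦ D_{n,l}(t) is norm-continuous. -/

theorem dyson_series_bounds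
    {H E E' : Type*} [NormedAddCommGroup H] [InnerProductSpace ℂ H]
    [NormedAddCommGroup E] [InnerProductSpace ℂ E] [CompleteSpace E]
    [NormedAddCommGroup E'] [InnerProductSpace ℂ E'] [CompleteSpace E']
    -- the interactions Vₙ on ℱₙ and V_{n+1} on ℱ_{n+1} and their free evolutions
    (Vn : E →L[ℂ] E) (Vn1 : E' →L[ℂ] E')
    (Vs : ℝ → E →L[ℂ] E) (Vs' : ℝ → E' →L[ℂ] E')
    (hVs_norm : ∀ s, ‖Vs s‖ = ‖Vn‖) (hVs'_norm : ∀ s, ‖Vs' s‖ = ‖Vn1‖)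
    (hVs_cont : ∀ x : E, Continuous fun s => Vs s x)
    (hVs'_cont : ∀ x : E', Continuous fun s => Vs' s x)
    -- A = a*(f)|_{ℱₙ} : ℱₙ → ℱ_{n+1}, of norm ‖f‖
    (f : H) (A : E →L[ℂ] E') (hA : ‖A‖ = ‖f‖)
    -- the Dyson series terms
    (D : ℕ → ℝ → E →L[ℂ] E')
    (hD0 : ∀ t, D 0 t = A)
    (hDrec : ∀ (l : ℕ) (t : ℝ) (x : E),
      D (l + 1) t x
        = ∫ s in (0 : ℝ)..t,
            (Complex.I • (D l s ∘L Vs s - Vs' s ∘L D l s)) x) :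
    (∀ (l : ℕ) (t : ℝ),
      ‖D l t‖ ≤ |t| ^ l / (l ! : ℝ) * (‖Vn‖ + ‖Vn1‖) ^ l * ‖f‖)
    ∧ (∀ l : ℕ, Continuous fun t => D l t)
    ∧ (∀ t : ℝ, Summable fun l => ‖D l t‖) := by
  have main : ∀ l : ℕ,
      (∀ t : ℝ, ‖D l t‖ ≤ |t| ^ l / (l ! : ℝ) * (‖Vn‖ + ‖Vn1‖) ^ l * ‖f‖)
        ∧ Continuous fun t => D l t := by
    intro l
    induction l with
    | zero =>
      constructor
      · intro t; simp [hD0, hA]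
      · simp only [hD0]; exact continuous_const
    | succ l ih =>
      obtain ⟨hbound, hcont⟩ := ih
      set F : ℝ → E →L[ℂ] E' :=
        fun s => Complex.I • (D l s ∘L Vs s - Vs' s ∘L D l s) with hF
      have hFx_cont : ∀ x : E, Continuous fun s => F s x := by
        intro x
        have c1 : Continuous fun s => (D l s) (Vs s x) := hcont.clm_apply (hVs_cont x)
        have c2 : Continuous fun s => (Vs' s) ((D l s) x) :=
          strongCont_comp Vs' ‖Vn1‖ (fun s => le_of_eq (hVs'_norm s)) hVs'_cont
            (fun s => D l s x) (hcont.clm_apply continuous_const)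
        have : Continuous fun s => Complex.I • ((D l s) (Vs s x) - (Vs' s) ((D l s) x)) :=
          (c1.sub c2).const_smul Complex.I
        simpa [hF] using this
      have hFx_norm : ∀ (s : ℝ) (x : E),
          ‖F s x‖ ≤ (‖Vn‖ + ‖Vn1‖) * ‖D l s‖ * ‖x‖ := by
        intro s x
        have h1 : ‖(D l s) (Vs s x)‖ ≤ ‖D l s‖ * (‖Vn‖ * ‖x‖) := by
          refine ((D l s).le_opNorm _).trans ?_
          refine mul_le_mul_of_nonneg_left ?_ (norm_nonneg _)
          have := (Vs s).le_opNorm x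
          rwa [hVs_norm s] at this
        have h2 : ‖(Vs' s) ((D l s) x)‖ ≤ ‖Vn1‖ * (‖D l s‖ * ‖x‖) := by
          refine ((Vs' s).le_opNorm _).trans ?_
          rw [hVs'_norm s]
          exact mul_le_mul_of_nonneg_left ((D l s).le_opNorm x) (norm_nonneg _)
        have hFx : F s x = Complex.I • ((D l s) (Vs s x) - (Vs' s) ((D l s) x)) := by
          simp [hF]
        rw [hFx, norm_smul, Complex.norm_I, one_mul]
        calc ‖(D l s) (Vs s x) - (Vs' s) ((D l s) x)‖
            ≤ ‖(D l s) (Vs s x)‖ + ‖(Vs' s) ((D l s) x)‖ := norm_sub_le _ _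
          _ ≤ ‖D l s‖ * (‖Vn‖ * ‖x‖) + ‖Vn1‖ * (‖D l s‖ * ‖x‖) := add_le_add h1 h2
          _ = (‖Vn‖ + ‖Vn1‖) * ‖D l s‖ * ‖x‖ := by ring
      have hFint : ∀ (x : E) (a b : ℝ),
          IntervalIntegrable (fun s => F s x) volume a b :=
        fun x a b => (hFx_cont x).intervalIntegrable a b
      constructor
      · -- the norm bound
        intro t
        have hbnn : (0:ℝ) ≤ |t| ^ (l + 1) / ((l + 1)! : ℝ) * (‖Vn‖ + ‖Vn1‖) ^ (l + 1) * ‖f‖ := by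
          positivity
        refine ContinuousLinearMap.opNorm_le_bound _ hbnn ?_
        intro x
        rw [hDrec l t x]
        have hle : ∀ᵐ s ∂(volume.restrict (Set.uIoc (0:ℝ) t)),
            ‖F s x‖ ≤ (‖Vn‖ + ‖Vn1‖) ^ (l + 1) * ‖f‖ * ‖x‖ / (l ! : ℝ) * |s| ^ l := by
          refine Eventually.of_forall fun s => ?_
          calc ‖F s x‖ ≤ (‖Vn‖ + ‖Vn1‖) * ‖D l s‖ * ‖x‖ := hFx_norm s x
            _ ≤ (‖Vn‖ + ‖Vn1‖) * (|s| ^ l / (l ! : ℝ) * (‖Vn‖ + ‖Vn1‖) ^ l * ‖f‖) * ‖x‖ := by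
                have h := hbound s
                gcongr
            _ = (‖Vn‖ + ‖Vn1‖) ^ (l + 1) * ‖f‖ * ‖x‖ / (l ! : ℝ) * |s| ^ l := by
                rw [pow_succ]; ring
        have hgint : IntervalIntegrable
            (fun s => (‖Vn‖ + ‖Vn1‖) ^ (l + 1) * ‖f‖ * ‖x‖ / (l ! : ℝ) * |s| ^ l)
            volume 0 t :=
          (Continuous.intervalIntegrable (continuous_const.mul (continuous_abs.pow l)) 0 t)
        calc ‖∫ s in (0:ℝ)..t, (Complex.I • (D l s ∘L Vs s - Vs' s ∘L D l s)) x‖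
            = ‖∫ s in (0:ℝ)..t, F s x‖ := rfl
          _ ≤ |∫ s in (0:ℝ)..t,
                (‖Vn‖ + ‖Vn1‖) ^ (l + 1) * ‖f‖ * ‖x‖ / (l ! : ℝ) * |s| ^ l| :=
              intervalIntegral.norm_integral_le_abs_of_norm_le hle hgint
          _ = (‖Vn‖ + ‖Vn1‖) ^ (l + 1) * ‖f‖ * ‖x‖ / (l ! : ℝ)
                * (|t| ^ (l + 1) / (l + 1)) := by
              rw [intervalIntegral.integral_const_mul, abs_mul,
                abs_of_nonneg (by positivity), abs_integral_abs_pow]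
          _ = |t| ^ (l + 1) / ((l + 1)! : ℝ) * (‖Vn‖ + ‖Vn1‖) ^ (l + 1) * ‖f‖ * ‖x‖ := by
              rw [Nat.factorial_succ, Nat.cast_mul, Nat.cast_add, Nat.cast_one]
              have h1 : (0:ℝ) < (l ! : ℝ) := by positivity
              have h2 : (0:ℝ) < (l:ℝ) + 1 := by positivity
              field_simp
      · -- continuity
        rw [continuous_iff_continuousAt]
        intro t₀
        set R : ℝ := |t₀| + 1 with hR
        set C : ℝ := (‖Vn‖ + ‖Vn1‖) ^ (l + 1) * ‖f‖ * R ^ l / (l ! : ℝ) with hC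
        have hCnn : 0 ≤ C := by
          have : (0:ℝ) ≤ R := by positivity
          positivity
        have key : ∀ t : ℝ, |t - t₀| ≤ 1 →
            ‖D (l + 1) t - D (l + 1) t₀‖ ≤ C * |t - t₀| := by
          intro t ht
          refine ContinuousLinearMap.opNorm_le_bound _
            (mul_nonneg hCnn (abs_nonneg _)) ?_
          intro x
          have hsub : (D (l + 1) t - D (l + 1) t₀) x = ∫ s in t₀..t, F s x := by
            rw [ContinuousLinearMap.sub_apply, hDrec l t x, hDrec l t₀ x]
            have h1 : (∫ s in (0:ℝ)..t, (Complex.I • (D l s ∘L Vs s - Vs' s ∘L D l s)) x)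
                = ∫ s in (0:ℝ)..t, F s x := rfl
            have h2 : (∫ s in (0:ℝ)..t₀, (Complex.I • (D l s ∘L Vs s - Vs' s ∘L D l s)) x)
                = ∫ s in (0:ℝ)..t₀, F s x := rfl
            rw [h1, h2,
              intervalIntegral.integral_interval_sub_left (hFint x 0 t) (hFint x 0 t₀)]
          rw [hsub]
          have htR : |t| ≤ R := by
            calc |t| = |(t - t₀) + t₀| := by ring_nf
              _ ≤ |t - t₀| + |t₀| := abs_add_le _ _
              _ ≤ 1 + |t₀| := by linarith
              _ = R := by rw [hR]; ring
          have ht₀R : |t₀| ≤ R := by rw [hR]; linarith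
          have hptw : ∀ s ∈ Set.uIoc t₀ t, ‖F s x‖ ≤ C * ‖x‖ := by
            intro s hs
            have hsR : |s| ≤ R := by
              obtain ⟨h1, h2⟩ := hs
              have e1 := abs_le.mp htR
              have e2 := abs_le.mp ht₀R
              rcases le_total t₀ t with h | h
              · rw [min_eq_left h] at h1; rw [max_eq_right h] at h2
                exact abs_le.mpr ⟨by linarith, by linarith⟩
              · rw [min_eq_right h] at h1; rw [max_eq_left h] at h2
                exact abs_le.mpr ⟨by linarith, by linarith⟩
            calc ‖F s x‖ ≤ (‖Vn‖ + ‖Vn1‖) * ‖D l s‖ * ‖x‖ := hFx_norm s x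
              _ ≤ (‖Vn‖ + ‖Vn1‖) * (R ^ l / (l ! : ℝ) * (‖Vn‖ + ‖Vn1‖) ^ l * ‖f‖) * ‖x‖ := by
                  have hD : ‖D l s‖ ≤ R ^ l / (l ! : ℝ) * (‖Vn‖ + ‖Vn1‖) ^ l * ‖f‖ := by
                    refine (hbound s).trans ?_
                    have hp : |s| ^ l ≤ R ^ l := pow_le_pow_left₀ (abs_nonneg s) hsR l
                    gcongr
                  exact mul_le_mul_of_nonneg_right
                    (mul_le_mul_of_nonneg_left hD (by positivity)) (norm_nonneg x)
              _ = C * ‖x‖ := by rw [hC, pow_succ]; ring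
          calc ‖∫ s in t₀..t, F s x‖ ≤ C * ‖x‖ * |t - t₀| :=
              intervalIntegral.norm_integral_le_of_norm_le_const hptw
            _ = C * |t - t₀| * ‖x‖ := by ring
        rw [ContinuousAt, tendsto_iff_norm_sub_tendsto_zero]
        refine squeeze_zero_norm' (a := fun t => C * |t - t₀|) ?_ ?_
        · have hev : ∀ᶠ t in 𝓝 t₀, |t - t₀| ≤ 1 := by
            have hball := Metric.closedBall_mem_nhds t₀ (zero_lt_one (α := ℝ))
            filter_upwards [hball] with t ht
            rw [Metric.mem_closedBall, Real.dist_eq] at ht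
            exact ht
          filter_upwards [hev] with t ht
          have := key t ht
          rw [Real.norm_eq_abs, abs_of_nonneg (norm_nonneg _)]
          exact this
        · have : Tendsto (fun t => C * |t - t₀|) (𝓝 t₀) (𝓝 (C * |t₀ - t₀|)) :=
            tendsto_const_nhds.mul ((continuous_id.sub continuous_const).abs.tendsto t₀)
          simpa using this
  refine ⟨fun l t => (main l).1 t, fun l => (main l).2, ?_⟩
  intro t
  have hsum : Summable fun l : ℕ => (|t| * (‖Vn‖ + ‖Vn1‖)) ^ l / (l ! : ℝ) * ‖f‖ :=
    (Real.summable_pow_div_factorial (|t| * (‖Vn‖ + ‖Vn1‖))).mul_right ‖f‖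
  refine Summable.of_nonneg_of_le (fun l => norm_nonneg _) (fun l => ?_) hsum
  calc ‖D l t‖ ≤ |t| ^ l / (l ! : ℝ) * (‖Vn‖ + ‖Vn1‖) ^ l * ‖f‖ := (main l).1 t
    _ = (|t| * (‖Vn‖ + ‖Vn1‖)) ^ l / (l ! : ℝ) * ‖f‖ := by rw [mul_pow]; ring
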